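/- arXiv:1810.09315 — 12 statements merged into one kernel-verified Lean document; each statement's English description precedes it below -/
import Mathlib

section
/- Let (X, 𝓑) be a measurable space, T : X → X a measurable map, and m a finite measure on X. Assume that for every measurable set A with m(A) > 0 one has ∑_{n≥1} m(T^{-n}(A)) = ∞. Then for every measurable set A, the set {x ∈ A : T^n(x) ∉ A for all n ≥ 1} of points of A that never return to A has m-measure zero. -/
open MeasureTheory

/-- If `T` is a measurable self-map of a measurable space `X` with a finite
measure `m`, and for every measurable set `A` of positive measure the series
`∑_{n ≥ 1} m (T^{-n} A)` diverges, then for every measurable set `A` the set of points of `A`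
that never return to `A` has `m`-measure zero. -/
theorem stmt0 {X : Type*} [MeasurableSpace X] (T : X → X) (hT : Measurable T)
    (m : Measure X) [IsFiniteMeasure m]
    (hdiv : ∀ A : Set X, MeasurableSet A → 0 < m A →
      ∑' n : ℕ, m (T^[n + 1] ⁻¹' A) = ⊤) :
    ∀ A : Set X, MeasurableSet A →
      m {x ∈ A | ∀ n : ℕ, 1 ≤ n → T^[n] x ∉ A} = 0 := by
  intro A hA
  set B : Set X := {x ∈ A | ∀ n : ℕ, 1 ≤ n → T^[n] x ∉ A} with hBdef
  have hB : MeasurableSet B := by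
    have hEq : B = A ∩ ⋂ n : ℕ, ⋂ _ : 1 ≤ n, T^[n] ⁻¹' Aᶜ := by
      ext x
      simp [hBdef, Set.mem_setOf_eq]
    rw [hEq]
    exact hA.inter (MeasurableSet.iInter fun n =>
      MeasurableSet.iInter fun _ => (hT.iterate n) hA.compl)
  by_contra h
  have hpos : 0 < m B := lt_of_le_of_ne zero_le (Ne.symm h)
  have hdisj : Pairwise (Function.onFun Disjoint fun n : ℕ => T^[n+1] ⁻¹' B) := by
    intro i j hij
    wlog hlt : i < j generalizing i j
    · exact (this hij.symm (hij.lt_or_gt.resolve_left hlt)).symm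
    refine Set.disjoint_left.mpr fun x hxi hxj => ?_
    have h1 : T^[i+1] x ∈ B := hxi
    have h2 : T^[j+1] x ∈ B := hxj
    have h3 : T^[j+1] x = T^[j-i] (T^[i+1] x) := by
      rw [← Function.iterate_add_apply]
      congr 1
      omega
    exact h1.2 (j - i) (by omega) (by rw [← h3]; exact h2.1)
  have hmeas : ∀ n : ℕ, MeasurableSet (T^[n+1] ⁻¹' B) := fun n => (hT.iterate (n+1)) hB
  have hsum : m (⋃ n : ℕ, T^[n+1] ⁻¹' B) = ∑' n : ℕ, m (T^[n+1] ⁻¹' B) :=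
    measure_iUnion hdisj hmeas
  have hfin : ∑' n : ℕ, m (T^[n+1] ⁻¹' B) ≠ ⊤ := by
    rw [← hsum]
    exact (measure_lt_top m _).ne
  exact hfin (hdiv B hB hpos)
end

section
/- Let (X, 𝓑) be a measurable space, m a finite measure on X, and κ a Markov kernel from X to X. If condition (main) holds, then for every measurable set A the set {x ∈ A : κ^n x A = 0 for all n ≥ 1} of points of A that never return to A with positive probability has m-measure zero. -/
open MeasureTheory ProbabilityTheory

/-- `kiter κ n` is the `n`-step kernel of the Markov chain with one-step transition kernel `κ`:
`kiter κ 0 = id` and `kiter κ (n+1) x A = ∫ (kiter κ n) y A d(κ x)(y)`. -/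
noncomputable def kiter {X : Type*} [MeasurableSpace X] (κ : Kernel X X) : ℕ → Kernel X X
  | 0 => Kernel.id
  | n + 1 => (kiter κ n) ∘ₖ κ

/-- The `n`-preimage of a set `A`: the set of points from which the chain reaches `A` at time
`n` with positive probability. -/
noncomputable def Qpre {X : Type*} [MeasurableSpace X] (κ : Kernel X X) (n : ℕ) (A : Set X) :
    Set X := {x : X | 0 < kiter κ n x A}

/-- If condition (main) holds, then for every measurable set `A` the set of
points of `A` that never return to `A` with positive probability has `m`-measure zero. -/
theorem stmt1 {X : Type*} [MeasurableSpace X] (m : Measure X) [IsFiniteMeasure m]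
    (κ : Kernel X X) [IsMarkovKernel κ]
    (hmain : ∀ A : Set X, MeasurableSet A → 0 < m A →
      ∑' n : ℕ, m (Qpre κ (n + 1) A ∩ A) = ⊤) :
    ∀ A : Set X, MeasurableSet A →
      m {x ∈ A | ∀ n : ℕ, 1 ≤ n → kiter κ n x A = 0} = 0 := by
  intro A hA
  set B := {x ∈ A | ∀ n : ℕ, 1 ≤ n → kiter κ n x A = 0} with hBdef
  have hBsub : B ⊆ A := fun x hx => hx.1
  have hBeq : B = A ∩ ⋂ n : ℕ, {x | kiter κ (n + 1) x A = 0} := by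
    ext x
    simp only [hBdef, Set.mem_sep_iff, Set.mem_inter_iff, Set.mem_iInter, Set.mem_setOf_eq]
    constructor
    · rintro ⟨hxA, h⟩
      exact ⟨hxA, fun n => h (n + 1) (Nat.succ_le_succ (Nat.zero_le n))⟩
    · rintro ⟨hxA, h⟩
      refine ⟨hxA, fun n hn => ?_⟩
      obtain ⟨k, rfl⟩ := Nat.exists_eq_add_of_le hn
      simpa [Nat.add_comm] using h k
  have hBmeas : MeasurableSet B := by
    rw [hBeq]
    exact hA.inter (MeasurableSet.iInter fun n =>
      (Kernel.measurable_coe (kiter κ (n + 1)) hA) (measurableSet_singleton 0))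
  by_contra hne
  have hpos : 0 < m B := pos_iff_ne_zero.mpr hne
  have hmainB := hmain B hBmeas hpos
  have hempty : ∀ n : ℕ, Qpre κ (n + 1) B ∩ B = ∅ := by
    intro n
    ext x
    simp only [Set.mem_inter_iff, Set.mem_empty_iff_false, iff_false]
    rintro ⟨hxQ, hxB⟩
    have h0 : kiter κ (n + 1) x A = 0 := hxB.2 (n + 1) (Nat.succ_le_succ (Nat.zero_le n))
    have hle : kiter κ (n + 1) x B ≤ kiter κ (n + 1) x A := measure_mono hBsub
    have : (0 : ENNReal) < 0 := lt_of_lt_of_le hxQ (h0 ▸ hle)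
    exact lt_irrefl _ this
  rw [show (∑' n : ℕ, m (Qpre κ (n + 1) B ∩ B)) = 0 by simp [hempty]] at hmainB
  exact (ENNReal.zero_ne_top) hmainB
end

section
/- Let (X, 𝓑) be a measurable space, m a finite measure on X, and κ a Markov kernel from X to X. Then the chain satisfies PRP(m) if and only if condition (main) holds, i.e. if and only if ∑_{n≥1} m(Q^{-n}(A) ∩ A) = ∞ for every measurable set A with m(A) > 0. -/
open MeasureTheory ProbabilityTheory

/-- A point `x ∈ A` is Poincaré recurrent with respect to `A` if for every `N` there is
`t ≥ N` with `κ^t x A > 0`. -/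
def PoincareRecurrent {X : Type*} [MeasurableSpace X] (κ : Kernel X X) (x : X) (A : Set X) :
    Prop := ∀ N : ℕ, ∃ t : ℕ, N ≤ t ∧ 0 < kiter κ t x A

/-- The chain satisfies `PRP(m)` if for every measurable set `A` the set of points of `A`
that are not Poincaré recurrent with respect to `A` has `m`-measure zero. -/
def PRP {X : Type*} [MeasurableSpace X] (κ : Kernel X X) (m : Measure X) : Prop :=
  ∀ A : Set X, MeasurableSet A → m {x ∈ A | ¬ PoincareRecurrent κ x A} = 0

lemma measurable_kiter_apply {X : Type*} [MeasurableSpace X] (κ : Kernel X X) (n : ℕ)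
    {A : Set X} (hA : MeasurableSet A) : Measurable fun x => kiter κ n x A :=
  Kernel.measurable_coe _ hA

/-- **Theorem 1 of the paper.** `PRP(m)` holds if and only if
`∑_{n ≥ 1} m (Q^{-n}(A) ∩ A) = ∞` for every measurable set `A` with `m(A) > 0`. -/
theorem stmt2 {X : Type*} [MeasurableSpace X] (m : Measure X) [IsFiniteMeasure m]
    (κ : Kernel X X) [IsMarkovKernel κ] :
    PRP κ m ↔
      (∀ A : Set X, MeasurableSet A → 0 < m A →
        ∑' n : ℕ, m (Qpre κ (n + 1) A ∩ A) = ⊤) := by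
  constructor
  · -- PRP → main
    intro hPRP A hA hmA
    by_contra hsum
    have hL : m (Filter.limsup (fun n => Qpre κ (n + 1) A ∩ A) Filter.atTop) = 0 :=
      measure_limsup_atTop_eq_zero hsum
    have hrec := hPRP A hA
    have hsub : {x ∈ A | PoincareRecurrent κ x A} ⊆
        Filter.limsup (fun n => Qpre κ (n + 1) A ∩ A) Filter.atTop := by
      intro x hx
      rw [Filter.mem_limsup_iff_frequently_mem, Filter.frequently_atTop]
      intro n
      obtain ⟨t, ht, hpos⟩ := hx.2 (n + 1)
      obtain ⟨s, rfl⟩ : ∃ s, t = s + 1 := ⟨t - 1, by omega⟩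
      exact ⟨s, by omega, hpos, hx.1⟩
    have hcover : A ⊆ Filter.limsup (fun n => Qpre κ (n + 1) A ∩ A) Filter.atTop ∪
        {x ∈ A | ¬ PoincareRecurrent κ x A} := by
      intro x hx
      by_cases h : PoincareRecurrent κ x A
      · exact Or.inl (hsub ⟨hx, h⟩)
      · exact Or.inr ⟨hx, h⟩
    have : m A = 0 := by
      have := (measure_mono hcover).trans (measure_union_le (μ := m) _ _)
      rw [hL, hrec, add_zero] at this
      exact le_zero_iff.mp this
    exact absurd this hmA.ne'
  · -- main → PRP
    intro hmain A hA
    set B : ℕ → Set X := fun N => {x ∈ A | ∀ t, N ≤ t → kiter κ t x A = 0} with hB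
    have hBmeas : ∀ N, MeasurableSet (B N) := by
      intro N
      have : B N = A ∩ ⋂ t, ⋂ (_ : N ≤ t), (fun x => kiter κ t x A) ⁻¹' {0} := by
        ext x; simp [hB, Set.mem_iInter]
      rw [this]
      exact hA.inter (MeasurableSet.iInter fun t => MeasurableSet.iInter fun _ =>
        (measurable_kiter_apply κ t hA) (measurableSet_singleton 0))
    have hBzero : ∀ N, m (B N) = 0 := by
      intro N
      by_contra h
      have hpos : 0 < m (B N) := pos_iff_ne_zero.mpr h
      have hmain' := hmain (B N) (hBmeas N) hpos
      have hterm : ∀ n ∉ Finset.range N, m (Qpre κ (n + 1) (B N) ∩ B N) = 0 := by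
        intro n hn
        have hNn : N ≤ n + 1 := by simp [Finset.mem_range, not_lt] at hn; omega
        have : Qpre κ (n + 1) (B N) ∩ B N = ∅ := by
          ext x
          simp only [Set.mem_inter_iff, Set.mem_empty_iff_false, iff_false, not_and]
          intro hxQ hxB
          have h1 : kiter κ (n + 1) x A = 0 := hxB.2 (n + 1) hNn
          have h2 : kiter κ (n + 1) x (B N) ≤ kiter κ (n + 1) x A :=
            measure_mono (fun y hy => hy.1)
          have : kiter κ (n + 1) x (B N) = 0 := le_antisymm (h1 ▸ h2) zero_le
          exact absurd hxQ (by simp [Qpre, this])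
        simp [this]
      rw [tsum_eq_sum hterm] at hmain'
      exact absurd hmain'
        (ENNReal.sum_lt_top.mpr fun i _ => measure_lt_top m _).ne
    have hsub : {x ∈ A | ¬ PoincareRecurrent κ x A} ⊆ ⋃ N, B N := by
      intro x hx
      obtain ⟨hxA, hnr⟩ := hx
      simp only [PoincareRecurrent, not_forall, not_exists, not_and, not_lt] at hnr
      obtain ⟨N, hN⟩ := hnr
      exact Set.mem_iUnion.mpr ⟨N, hxA, fun t ht => le_antisymm (hN t ht) zero_le⟩
    exact measure_mono_null hsub (measure_iUnion_null hBzero)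
end

section
/- Let X be a compact metric space with its Borel σ-algebra, m a finite Borel measure on X, and κ a Markov kernel from X to X satisfying condition (main). Then m-almost every point x ∈ X is topologically recurrent: for every open set U containing x and every N there exists t ≥ N with κ^t x U > 0. -/
open MeasureTheory ProbabilityTheory

/-- The set of points of `A` that never return to `A` after time `N` is null. -/
lemma key_lemma {X : Type*} [MeasurableSpace X]
    (m : Measure X) [IsFiniteMeasure m] (κ : Kernel X X)
    (hmain : ∀ A : Set X, MeasurableSet A → 0 < m A →
      ∑' n : ℕ, m (Qpre κ (n + 1) A ∩ A) = ⊤)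
    (A : Set X) (hA : MeasurableSet A) (N : ℕ) :
    m {x | x ∈ A ∧ ∀ t, N ≤ t → kiter κ t x A = 0} = 0 := by
  set F : Set X := {x | x ∈ A ∧ ∀ t, N ≤ t → kiter κ t x A = 0} with hF
  have hFm : MeasurableSet F := by
    have : F = A ∩ ⋂ t, ⋂ (_ : N ≤ t), {x | kiter κ t x A = 0} := by
      ext x; simp [hF, Set.mem_iInter]
    rw [this]
    exact hA.inter (MeasurableSet.iInter fun t => MeasurableSet.iInter fun _ =>
      (Kernel.measurable_coe (kiter κ t) hA) (measurableSet_singleton 0))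
  by_contra h
  have hpos : 0 < m F := pos_iff_ne_zero.mpr h
  have hsum := hmain F hFm hpos
  have hzero : ∀ n, N ≤ n → m (Qpre κ (n + 1) F ∩ F) = 0 := by
    intro n hn
    convert measure_empty (μ := m)
    ext x
    simp only [Set.mem_inter_iff, Set.mem_empty_iff_false, iff_false, not_and]
    intro hx hxF
    have hle : kiter κ (n + 1) x F ≤ kiter κ (n + 1) x A :=
      measure_mono (fun y hy => hy.1)
    have : (0 : ENNReal) < kiter κ (n + 1) x A := lt_of_lt_of_le hx hle
    have h0 := hxF.2 (n + 1) (le_trans hn (Nat.le_succ n))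
    rw [h0] at this
    exact lt_irrefl 0 this
  have hfin : ∑' n : ℕ, m (Qpre κ (n + 1) F ∩ F) ≠ ⊤ := by
    rw [tsum_eq_sum (s := Finset.range N)
      (fun n hn => hzero n (le_of_not_gt (by simpa using hn)))]
    exact (ENNReal.sum_lt_top.mpr fun n _ => measure_lt_top m _).ne
  exact hfin hsum

/-- **Theorem 2, topological part.** On a compact metric space with a finite Borel
measure `m` satisfying condition (main), `m`-almost every point is topologically recurrent. -/
theorem stmt3 {X : Type*} [MetricSpace X] [CompactSpace X]
    [MeasurableSpace X] [BorelSpace X]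
    (m : Measure X) [IsFiniteMeasure m] (κ : Kernel X X) [IsMarkovKernel κ]
    (hmain : ∀ A : Set X, MeasurableSet A → 0 < m A →
      ∑' n : ℕ, m (Qpre κ (n + 1) A ∩ A) = ⊤) :
    ∀ᵐ x ∂m, ∀ U : Set X, IsOpen U → x ∈ U →
      ∀ N : ℕ, ∃ t : ℕ, N ≤ t ∧ 0 < kiter κ t x U := by
  obtain ⟨b, hbc, -, hb⟩ := TopologicalSpace.exists_countable_basis X
  set Bad : Set X := ⋃ B ∈ b, ⋃ N : ℕ, {x | x ∈ B ∧ ∀ t, N ≤ t → kiter κ t x B = 0}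
    with hBad
  have hBadNull : m Bad = 0 := by
    refine (measure_biUnion_null_iff hbc).mpr fun B hB => ?_
    refine measure_iUnion_null fun N => ?_
    exact key_lemma m κ hmain B (hb.isOpen hB).measurableSet N
  rw [MeasureTheory.ae_iff]
  refine measure_mono_null ?_ hBadNull
  intro x hx
  simp only [Set.mem_setOf_eq] at hx
  push_neg at hx
  obtain ⟨U, hU, hxU, N, hN⟩ := hx
  obtain ⟨B, hBb, hxB, hBU⟩ := hb.exists_subset_of_mem_open hxU hU
  refine Set.mem_biUnion hBb (Set.mem_iUnion.mpr ⟨N, hxB, fun t ht => ?_⟩)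
  by_contra hne
  have : (0:ENNReal) < kiter κ t x B := pos_iff_ne_zero.mpr hne
  have hle : kiter κ t x B ≤ kiter κ t x U := measure_mono hBU
  exact absurd (lt_of_lt_of_le this hle) (not_lt.mpr (hN t ht))
end

section
/- Let X be a second-countable topological space equipped with its Borel σ-algebra, m a finite Borel measure on X, and κ a Markov kernel from X to X. Assume that for every measurable set A the set {x ∈ A : κ^n x A = 0 for all n ≥ 1} has m-measure zero. Then for m-almost every x ∈ X the following holds: for every open set U containing x there exists n ≥ 1 with κ^n x U > 0. -/
open MeasureTheory ProbabilityTheory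

/-- On a second-countable topological space with a finite Borel measure `m`,
if for every measurable set `A` the set of points of `A` that never return to `A` with positive
probability is `m`-null, then `m`-almost every point is topologically recurrent. -/
theorem stmt5 {X : Type*} [TopologicalSpace X] [SecondCountableTopology X]
    [MeasurableSpace X] [BorelSpace X]
    (m : Measure X) [IsFiniteMeasure m] (κ : Kernel X X) [IsMarkovKernel κ]
    (hPRP : ∀ A : Set X, MeasurableSet A →
      m {x ∈ A | ∀ n : ℕ, 1 ≤ n → kiter κ n x A = 0} = 0) :
    ∀ᵐ x ∂m, ∀ U : Set X, IsOpen U → x ∈ U →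
      ∃ n : ℕ, 1 ≤ n ∧ 0 < kiter κ n x U := by
  have hbasis := TopologicalSpace.isBasis_countableBasis X
  have hcount := TopologicalSpace.countable_countableBasis X
  have hnull : m (⋃ B ∈ TopologicalSpace.countableBasis X,
      {x ∈ B | ∀ n : ℕ, 1 ≤ n → kiter κ n x B = 0}) = 0 :=
    (measure_biUnion_null_iff hcount).mpr fun B hB =>
      hPRP B (TopologicalSpace.isOpen_of_mem_countableBasis hB).measurableSet
  filter_upwards [measure_eq_zero_iff_ae_notMem.mp hnull] with x hx U hU hxU
  by_contra h
  push_neg at h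
  obtain ⟨B, hB, hxB, hBU⟩ := hbasis.exists_subset_of_mem_open hxU hU
  refine hx (Set.mem_biUnion hB ⟨hxB, fun n hn => ?_⟩)
  have hmono : kiter κ n x B ≤ kiter κ n x U := measure_mono hBU
  exact le_antisymm (hmono.trans (h n hn)) zero_le
end

section
/- Let X be a second-countable topological space equipped with its Borel σ-algebra, m a finite Borel measure on X, and κ a Markov kernel from X to X such that the topological image Q(A) is measurable for every measurable set A. If the backward conservativity property holds — for every measurable set A with Q^{-1}(A) ⊆ A one has m(A \ Q^{-1}(A)) = 0 — then the forward conservativity property holds: for every measurable set A with Q(A) ⊆ A one has m(A \ Q(A)) = 0. -/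
open MeasureTheory ProbabilityTheory

/-- The topological image of a set `A` under the chain:
`Q(A) = {y | ∃ x ∈ A, κ x U > 0 for every open U ∋ y}`. -/
noncomputable def Qimg {X : Type*} [TopologicalSpace X] [MeasurableSpace X]
    (κ : Kernel X X) (A : Set X) : Set X :=
  {y : X | ∃ x ∈ A, ∀ U : Set X, IsOpen U → y ∈ U → 0 < κ x U}

/-- The `1`-preimage of a set `A` under the chain: `Q^{-1}(A) = {x | κ x A > 0}`. -/
noncomputable def Qpre1 {X : Type*} [MeasurableSpace X] (κ : Kernel X X) (A : Set X) :
    Set X := {x : X | 0 < κ x A}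

/-- In a second countable space, the set of points having a null open neighborhood is null. -/
lemma null_of_locally_null {X : Type*} [TopologicalSpace X] [SecondCountableTopology X]
    [MeasurableSpace X] (μ : Measure X) {N : Set X}
    (h : ∀ y ∈ N, ∃ U : Set X, IsOpen U ∧ y ∈ U ∧ μ U = 0) : μ N = 0 := by
  obtain ⟨b, hbc, -, hb⟩ := TopologicalSpace.exists_countable_basis X
  have hsub : N ⊆ ⋃ U ∈ {U ∈ b | μ U = 0}, U := by
    intro y hy
    obtain ⟨U, hU, hyU, hU0⟩ := h y hy
    obtain ⟨V, hVb, hyV, hVU⟩ := hb.exists_subset_of_mem_open hyU hU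
    exact Set.mem_biUnion ⟨hVb, measure_mono_null hVU hU0⟩ hyV
  refine measure_mono_null hsub ?_
  exact (measure_biUnion_null_iff (hbc.mono (Set.sep_subset _ _))).2 fun U hU => hU.2

/-- **Theorem 3(c).** Assuming the topological image of every measurable set is
measurable, backward conservativity implies forward conservativity. -/
theorem stmt8 {X : Type*} [TopologicalSpace X] [SecondCountableTopology X]
    [MeasurableSpace X] [BorelSpace X]
    (m : Measure X) [IsFiniteMeasure m] (κ : Kernel X X) [IsMarkovKernel κ]
    (hQmeas : ∀ A : Set X, MeasurableSet A → MeasurableSet (Qimg κ A))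
    (hback : ∀ A : Set X, MeasurableSet A → Qpre1 κ A ⊆ A → m (A \ Qpre1 κ A) = 0) :
    ∀ A : Set X, MeasurableSet A → Qimg κ A ⊆ A → m (A \ Qimg κ A) = 0 := by
  intro A hA hQA
  set C := Qimg κ A with hC
  -- for x ∈ A, κ x Cᶜ = 0
  have key : ∀ x ∈ A, κ x Cᶜ = 0 := by
    intro x hx
    refine null_of_locally_null (κ x) fun y hy => ?_
    by_contra hcon
    push_neg at hcon
    exact hy ⟨x, hx, fun U hUopen hyU =>
      pos_iff_ne_zero.2 fun h0 => (hcon U hUopen hyU h0)⟩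
  have hpre : Qpre1 κ Cᶜ ⊆ Cᶜ := by
    intro x hx
    intro hxC
    have hxA : x ∈ A := hQA hxC
    simp only [Qpre1, Set.mem_setOf_eq, key x hxA, lt_self_iff_false] at hx
  have h0 := hback Cᶜ (hQmeas A hA).compl hpre
  refine measure_mono_null ?_ h0
  intro x hx
  refine ⟨fun hxC => hx.2 hxC, fun hxp => ?_⟩
  simp only [Qpre1, Set.mem_setOf_eq, key x hx.1, lt_self_iff_false] at hxp
end

section
/- There exists a Markov kernel κ on the unit interval [0,1] (with Borel σ-algebra and Lebesgue measure m) such that: (i) for every nonempty set A ⊆ [0,1] and every n ≥ 1 the n-fold topological image Q^n(A) equals [0,1], hence ∑_{n≥1} m(Q^n(A) ∩ A) = ∞ for every measurable A with m(A) > 0; and yet (ii) there exists a measurable set A with m(A) > 0 such that κ^t x A = 0 for every x ∈ [0,1] and every t ≥ 1, so PRP(m) fails. -/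
open MeasureTheory ProbabilityTheory

/-- Lebesgue measure on the unit interval `[0,1]`, viewed as a measure on the subtype. -/
noncomputable def lebOnI : Measure (Set.Icc (0 : ℝ) 1) :=
  (volume : Measure ℝ).comap Subtype.val

section Aux
open TopologicalSpace ENNReal

local notation "I" => Set.Icc (0:ℝ) 1

noncomputable def stmt10.q : ℕ → I := TopologicalSpace.denseSeq I

noncomputable def stmt10.mu : Measure I :=
  Measure.sum (fun n => (2 : ℝ≥0∞)⁻¹ ^ (n+1) • Measure.dirac (stmt10.q n))

namespace stmt10

instance : IsProbabilityMeasure mu := by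
  constructor
  rw [mu, Measure.sum_apply _ MeasurableSet.univ]
  simp [pow_succ, ENNReal.tsum_mul_right, ENNReal.tsum_geometric]
  exact ENNReal.mul_inv_cancel two_ne_zero ENNReal.ofNat_ne_top

lemma meas_img (s : Set I) (hs : MeasurableSet s) : MeasurableSet (Subtype.val '' s) :=
  MeasurableSet.subtype_image measurableSet_Icc hs

lemma leb_univ : lebOnI Set.univ = 1 := by
  rw [lebOnI, Measure.comap_apply _ Subtype.val_injective meas_img _ MeasurableSet.univ]
  rw [Set.image_univ, Subtype.range_val, Real.volume_Icc]
  norm_num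

lemma leb_range : lebOnI (Set.range q) = 0 := by
  rw [lebOnI, Measure.comap_apply _ Subtype.val_injective meas_img _
    (Set.countable_range q).measurableSet]
  exact ((Set.countable_range q).image Subtype.val).measure_zero volume

lemma mu_compl : mu (Set.range q)ᶜ = 0 := by
  rw [mu, Measure.sum_apply _ (Set.countable_range q).measurableSet.compl]
  simp [Measure.dirac_apply' _ (Set.countable_range q).measurableSet.compl,
    Set.indicator_of_notMem (by simp : (q _ : I) ∉ (Set.range q)ᶜ)]

lemma mu_open (U : Set I) (hU : IsOpen U) (y : I) (hy : y ∈ U) : 0 < mu U := by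
  obtain ⟨n, hn⟩ : ∃ n, q n ∈ U := (TopologicalSpace.denseRange_denseSeq I).exists_mem_open hU ⟨y, hy⟩
  calc (0:ℝ≥0∞) < (2 : ℝ≥0∞)⁻¹ ^ (n+1) • Measure.dirac (q n) U := by
        simp [Measure.dirac_apply' _ hU.measurableSet, Set.indicator_of_mem hn]
        exact ENNReal.pow_pos (ENNReal.inv_pos.mpr ENNReal.ofNat_ne_top) _
    _ ≤ mu U := Measure.le_sum _ n U

noncomputable def kk : Kernel I I := Kernel.const I mu

lemma Qimg_eq (A : Set I) (hA : A.Nonempty) : Qimg kk A = Set.univ := by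
  ext y
  simp only [Set.mem_univ, iff_true, Qimg, Set.mem_setOf_eq]
  obtain ⟨x, hx⟩ := hA
  exact ⟨x, hx, fun U hU hy => by rw [kk, Kernel.const_apply]; exact mu_open U hU y hy⟩

lemma Qimg_iter (A : Set I) (hA : A.Nonempty) : ∀ n, 1 ≤ n → (Qimg kk)^[n] A = Set.univ := by
  intro n hn
  induction n with
  | zero => omega
  | succ m ih =>
    rw [Function.iterate_succ_apply']
    rcases Nat.eq_or_lt_of_le hn with h | h
    · have hm : m = 0 := by omega
      subst hm; simpa using Qimg_eq A hA
    · rw [ih (by omega)]; exact Qimg_eq _ ⟨q 0, trivial⟩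

lemma kiter_zero (t : ℕ) (ht : 1 ≤ t) : ∀ x : I, kiter kk t x (Set.range q)ᶜ = 0 := by
  induction t with
  | zero => omega
  | succ s ih =>
    intro x
    rcases Nat.eq_or_lt_of_le ht with h | h
    · have h1 : kiter kk 1 = kk := by
        show Kernel.id ∘ₖ kk = kk
        exact Kernel.id_comp kk
      rw [← h, h1, kk, Kernel.const_apply]
      exact mu_compl
    · show ((kiter kk s) ∘ₖ kk) x (Set.range q)ᶜ = 0
      rw [Kernel.comp_apply' _ _ _ (Set.countable_range q).measurableSet.compl]
      simp only [kk, Kernel.const_apply]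
      rw [lintegral_eq_zero_iff]
      · exact Filter.Eventually.of_forall fun y => by
          have := ih (by omega) y; simpa [kk] using this
      · exact Kernel.measurable_coe _ (Set.countable_range q).measurableSet.compl

lemma leb_A : lebOnI (Set.range q)ᶜ = 1 := by
  rw [measure_compl (Set.countable_range q).measurableSet
    (by rw [leb_range]; exact ENNReal.zero_ne_top), leb_univ, leb_range]
  simp

end stmt10

end Aux

/-- There is a Markov kernel on `[0,1]` (with Lebesgue measure `m`) whose
`n`-fold topological image of every nonempty set is all of `[0,1]` (so that
`∑_{n≥1} m (Q^n(A) ∩ A) = ∞` whenever `m A > 0`), and yet some measurable set `A` with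
`m A > 0` satisfies `κ^t x A = 0` for all `x` and all `t ≥ 1`, so `PRP(m)` fails. -/

theorem stmt10 :
    ∃ κ : Kernel (Set.Icc (0 : ℝ) 1) (Set.Icc (0 : ℝ) 1), IsMarkovKernel κ ∧
      (∀ A : Set (Set.Icc (0 : ℝ) 1), A.Nonempty →
        ∀ n : ℕ, 1 ≤ n → (Qimg κ)^[n] A = Set.univ) ∧
      (∀ A : Set (Set.Icc (0 : ℝ) 1), MeasurableSet A → 0 < lebOnI A →
        ∑' n : ℕ, lebOnI ((Qimg κ)^[n + 1] A ∩ A) = ⊤) ∧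
      (∃ A : Set (Set.Icc (0 : ℝ) 1), MeasurableSet A ∧ 0 < lebOnI A ∧
        ∀ x : Set.Icc (0 : ℝ) 1, ∀ t : ℕ, 1 ≤ t → kiter κ t x A = 0) ∧
      ¬ PRP κ lebOnI := by
  classical
  refine ⟨stmt10.kk, by rw [stmt10.kk]; infer_instance, ?_, ?_, ?_, ?_⟩
  · exact fun A hA n hn => stmt10.Qimg_iter A hA n hn
  · intro A hA hpos
    have hne : A.Nonempty := Set.nonempty_iff_ne_empty.mpr (by rintro rfl; simp at hpos)
    have : ∀ n : ℕ, lebOnI ((Qimg stmt10.kk)^[n + 1] A ∩ A) = lebOnI A := by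
      intro n
      rw [stmt10.Qimg_iter A hne (n+1) (by omega), Set.univ_inter]
    simp_rw [this]
    exact ENNReal.tsum_const_eq_top_of_ne_zero hpos.ne'
  · exact ⟨(Set.range stmt10.q)ᶜ, (Set.countable_range stmt10.q).measurableSet.compl,
      by rw [stmt10.leb_A]; norm_num, fun x t ht => stmt10.kiter_zero t ht x⟩
  · intro hPRP
    have h := hPRP (Set.range stmt10.q)ᶜ (Set.countable_range stmt10.q).measurableSet.compl
    have heq : {x ∈ (Set.range stmt10.q)ᶜ | ¬ PoincareRecurrent stmt10.kk x (Set.range stmt10.q)ᶜ}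
        = (Set.range stmt10.q)ᶜ := by
      ext x
      simp only [Set.mem_setOf_eq, and_iff_left_iff_imp]
      intro _ hrec
      obtain ⟨t, ht, hpos⟩ := hrec 1
      rw [stmt10.kiter_zero t ht x] at hpos
      exact lt_irrefl _ hpos
    rw [heq, stmt10.leb_A] at h
    exact one_ne_zero h
end

section
/- Let (X, 𝓑), m, X₁, X₂ and κ be as in the two-component example. Then for every measurable set B ⊆ X₁, every x ∈ X and every t ≥ 1 one has κ^t x B < 1. In particular, no point of X is strongly Poincaré recurrent with respect to any measurable subset of X₁. -/
open MeasureTheory ProbabilityTheory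

/-- **Example 5, second part.** In the two-component example, for every
measurable `B ⊆ X₁`, every `x ∈ X` and every `t ≥ 1` one has `κ^t x B < 1`; in particular no
point of `X` is strongly Poincaré recurrent with respect to any measurable subset of `X₁`. -/
theorem stmt12 {X : Type*} [MeasurableSpace X] (m : Measure X) [IsFiniteMeasure m]
    (X₁ X₂ : Set X) (hX₁ : MeasurableSet X₁) (hX₂ : MeasurableSet X₂)
    (hdisj : Disjoint X₁ X₂) (hunion : X₁ ∪ X₂ = Set.univ)
    (hm₁ : 0 < m X₁) (hm₂ : 0 < m X₂)
    (κ : Kernel X X) [IsMarkovKernel κ]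
    (hκ₁ : ∀ x ∈ X₁, ∀ B : Set X, MeasurableSet B →
      κ x B = m (B ∩ X₁) / (2 * m X₁) + m (B ∩ X₂) / (2 * m X₂))
    (hκ₂ : ∀ x ∈ X₂, ∀ B : Set X, MeasurableSet B → κ x B = m (B ∩ X₂) / m X₂) :
    ∀ B : Set X, MeasurableSet B → B ⊆ X₁ →
      (∀ x : X, ∀ t : ℕ, 1 ≤ t → kiter κ t x B < 1) ∧
        ∀ x : X, ¬ ∃ t : ℕ, 1 ≤ t ∧ kiter κ t x B = 1 := by
  intro B hB hBX₁
  have hne : m X₁ ≠ 0 := hm₁.ne'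
  have hfin : m X₁ ≠ ⊤ := measure_ne_top m X₁
  have hBX₂ : m (B ∩ X₂) = 0 := by
    have hsub : B ∩ X₂ ⊆ (∅ : Set X) := fun y hy =>
      (Set.disjoint_iff.1 hdisj) ⟨hBX₁ hy.1, hy.2⟩
    exact measure_mono_null hsub measure_empty
  have hstep : ∀ x : X, κ x B ≤ 2⁻¹ := by
    intro x
    have hx : x ∈ X₁ ∨ x ∈ X₂ := by
      have := Set.mem_univ x
      rw [← hunion] at this
      exact this
    rcases hx with hx | hx
    · rw [hκ₁ x hx B hB, hBX₂]
      have hkey : m X₁ / (2 * m X₁) = 2⁻¹ := by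
        rw [mul_comm, show m X₁ / (m X₁ * 2) = (m X₁ * 1) / (m X₁ * 2) by rw [mul_one],
          ENNReal.mul_div_mul_left 1 2 hne hfin, one_div]
      calc m (B ∩ X₁) / (2 * m X₁) + 0 / (2 * m X₂)
          ≤ m X₁ / (2 * m X₁) := by
            simp only [ENNReal.zero_div, add_zero]
            exact ENNReal.div_le_div_right (measure_mono Set.inter_subset_right) _
        _ = 2⁻¹ := hkey
    · rw [hκ₂ x hx B hB, hBX₂]
      simp
  have hle : ∀ n : ℕ, ∀ x : X, kiter κ (n + 1) x B ≤ 2⁻¹ := by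
    intro n
    induction n with
    | zero =>
      intro x
      show (kiter κ 0 ∘ₖ κ) x B ≤ _
      rw [show kiter κ 0 = Kernel.id from rfl, Kernel.id_comp]
      exact hstep x
    | succ n ih =>
      intro x
      have heq : kiter κ (n + 2) x B = ∫⁻ y, kiter κ (n + 1) y B ∂(κ x) := by
        show ((kiter κ (n + 1)) ∘ₖ κ) x B = _
        rw [Kernel.comp_apply' _ _ _ hB]
      rw [heq]
      calc ∫⁻ y, kiter κ (n + 1) y B ∂(κ x) ≤ ∫⁻ _, 2⁻¹ ∂(κ x) := lintegral_mono ih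
        _ = 2⁻¹ := by simp
  have hlt : ∀ x : X, ∀ t : ℕ, 1 ≤ t → kiter κ t x B < 1 := by
    intro x t ht
    obtain ⟨n, rfl⟩ := Nat.exists_eq_add_of_le ht
    rw [add_comm]
    calc kiter κ (n + 1) x B ≤ 2⁻¹ := hle n x
      _ < 1 := by norm_num
  exact ⟨hlt, fun x ⟨t, ht, heq⟩ => (hlt x t ht).ne heq⟩
end

section
/- Let (X, 𝓑), m, X₁, X₂ and κ be as in the two-component example. Then for every measurable set A ⊆ X₁ one has (κ^n m)(A) = 2^{-n}·m(A) for all n ≥ 1, and consequently ∑_{n≥1} (κ^n m)(A) = m(A) < ∞. -/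
open MeasureTheory ProbabilityTheory
open scoped ENNReal

/-- **Lemma 3 of the paper.** In the two-component example, for every
measurable `A ⊆ X₁` one has `(κ^n m)(A) = m A / 2^n` for all `n ≥ 1`, and consequently
`∑_{n ≥ 1} (κ^n m)(A) = m A < ∞`. Here `κ^n m = m.bind (kiter κ n)` is the distribution at
time `n` of the chain started from `m`. -/
theorem stmt13 {X : Type*} [MeasurableSpace X] (m : Measure X) [IsFiniteMeasure m]
    (X₁ X₂ : Set X) (hX₁ : MeasurableSet X₁) (hX₂ : MeasurableSet X₂)
    (hdisj : Disjoint X₁ X₂) (hunion : X₁ ∪ X₂ = Set.univ)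
    (hm₁ : 0 < m X₁) (hm₂ : 0 < m X₂)
    (κ : Kernel X X) [IsMarkovKernel κ]
    (hκ₁ : ∀ x ∈ X₁, ∀ B : Set X, MeasurableSet B →
      κ x B = m (B ∩ X₁) / (2 * m X₁) + m (B ∩ X₂) / (2 * m X₂))
    (hκ₂ : ∀ x ∈ X₂, ∀ B : Set X, MeasurableSet B → κ x B = m (B ∩ X₂) / m X₂) :
    ∀ A : Set X, MeasurableSet A → A ⊆ X₁ →
      (∀ n : ℕ, 1 ≤ n → (m.bind (kiter κ n)) A = m A / 2 ^ n) ∧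
        (∑' n : ℕ, (m.bind (kiter κ (n + 1))) A = m A) ∧ m A < ⊤ := by
  intro A hA hAX₁
  have hX₁0 : m X₁ ≠ 0 := hm₁.ne'
  have hX₁fin : m X₁ ≠ ⊤ := (measure_lt_top m X₁).ne
  have hAcapX₁ : A ∩ X₁ = A := Set.inter_eq_left.mpr hAX₁
  have hAcapX₂ : A ∩ X₂ = ∅ := Set.disjoint_iff_inter_eq_empty.mp
    (hdisj.mono_left hAX₁)
  have hX₁capX₂ : X₁ ∩ X₂ = ∅ := Set.disjoint_iff_inter_eq_empty.mp hdisj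
  -- value of κ · X₁
  have hκX₁ : ∀ x, κ x X₁ = X₁.indicator (fun _ => (2 : ℝ≥0∞)⁻¹) x := by
    intro x
    rcases (Set.mem_union x X₁ X₂).mp (hunion ▸ Set.mem_univ x) with hx | hx
    · rw [Set.indicator_of_mem hx, hκ₁ x hx X₁ hX₁, Set.inter_self, hX₁capX₂,
        measure_empty, ENNReal.zero_div, add_zero, ENNReal.div_eq_inv_mul,
        ENNReal.mul_inv (Or.inl two_ne_zero) (Or.inl (by norm_num)), mul_assoc,
        ENNReal.inv_mul_cancel hX₁0 hX₁fin, mul_one]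
    · have hx1 : x ∉ X₁ := fun h => (Set.disjoint_left.mp hdisj h) hx
      rw [Set.indicator_of_notMem hx1, hκ₂ x hx X₁ hX₁, hX₁capX₂, measure_empty,
        ENNReal.zero_div]
  -- value of κ · A
  have hκA : ∀ x, κ x A = X₁.indicator (fun _ => m A / m X₁ * 2⁻¹) x := by
    intro x
    rcases (Set.mem_union x X₁ X₂).mp (hunion ▸ Set.mem_univ x) with hx | hx
    · rw [Set.indicator_of_mem hx, hκ₁ x hx A hA, hAcapX₁, hAcapX₂, measure_empty,
        ENNReal.zero_div, add_zero, div_eq_mul_inv, div_eq_mul_inv,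
        ENNReal.mul_inv (Or.inl two_ne_zero) (Or.inl (by norm_num)), mul_comm (2 : ℝ≥0∞)⁻¹,
        ← mul_assoc]
    · have hx1 : x ∉ X₁ := fun h => (Set.disjoint_left.mp hdisj h) hx
      rw [Set.indicator_of_notMem hx1, hκ₂ x hx A hA, hAcapX₂, measure_empty,
        ENNReal.zero_div]
  -- pointwise formula for the n-step kernel, n ≥ 1
  have key : ∀ n : ℕ, 1 ≤ n → ∀ x,
      kiter κ n x A = X₁.indicator (fun _ => m A / m X₁ * 2⁻¹ ^ n) x := by
    intro n hn
    induction n, hn using Nat.le_induction with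
    | base =>
      intro x
      have h1 : kiter κ 1 = κ := by
        show (kiter κ 0) ∘ₖ κ = κ
        show Kernel.id ∘ₖ κ = κ
        exact Kernel.id_comp κ
      rw [h1, hκA x, pow_one]
    | succ n hn ih =>
      intro x
      have hstep : kiter κ (n + 1) = (kiter κ n) ∘ₖ κ := rfl
      rw [hstep, Kernel.comp_apply' _ _ _ hA]
      have : ∫⁻ y, kiter κ n y A ∂(κ x)
          = ∫⁻ y, X₁.indicator (fun _ => m A / m X₁ * 2⁻¹ ^ n) y ∂(κ x) := by
        exact lintegral_congr fun y => ih y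
      rw [this, lintegral_indicator_const hX₁, hκX₁ x]
      rcases Set.indicator_eq_zero_or_self X₁ (fun _ => (2:ℝ≥0∞)⁻¹) x with h | h
      · rw [h, mul_zero]
        have hx1 : x ∉ X₁ := by
          intro hx
          rw [Set.indicator_of_mem hx] at h
          exact (by simp : (2 : ℝ≥0∞)⁻¹ ≠ 0) h
        rw [Set.indicator_of_notMem hx1]
      · rw [h]
        have hx1 : x ∈ X₁ := by
          by_contra hx
          rw [Set.indicator_of_notMem hx] at h
          exact (by simp : (2 : ℝ≥0∞)⁻¹ ≠ 0) h.symm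
        rw [Set.indicator_of_mem hx1, pow_succ, ← mul_assoc]
  -- formula for the distribution at time n
  have hbind : ∀ n : ℕ, 1 ≤ n → (m.bind (kiter κ n)) A = m A / 2 ^ n := by
    intro n hn
    rw [Measure.bind_apply hA (kiter κ n).measurable.aemeasurable]
    calc ∫⁻ x, kiter κ n x A ∂m
        = ∫⁻ x, X₁.indicator (fun _ => m A / m X₁ * 2⁻¹ ^ n) x ∂m :=
          lintegral_congr fun x => key n hn x
      _ = m A / m X₁ * 2⁻¹ ^ n * m X₁ := lintegral_indicator_const hX₁ _
      _ = m A / m X₁ * m X₁ * 2⁻¹ ^ n := by ring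
      _ = m A * 2⁻¹ ^ n := by rw [ENNReal.div_mul_cancel hX₁0 hX₁fin]
      _ = m A / 2 ^ n := by rw [div_eq_mul_inv, ENNReal.inv_pow]
  refine ⟨hbind, ?_, lt_of_le_of_lt (measure_mono (Set.subset_univ A)) (measure_lt_top m _)⟩
  have : ∀ n : ℕ, (m.bind (kiter κ (n + 1))) A = m A * 2⁻¹ ^ (n + 1) := by
    intro n
    rw [hbind (n + 1) (Nat.le_add_left 1 n), div_eq_mul_inv, ENNReal.inv_pow]
  rw [tsum_congr this, ENNReal.tsum_mul_left, ENNReal.tsum_geometric_add_one,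
    ENNReal.one_sub_inv_two, inv_inv]
  have : (2 : ℝ≥0∞)⁻¹ * 2 = 1 := ENNReal.inv_mul_cancel two_ne_zero (by norm_num)
  rw [this, mul_one]
end

section
/- Let (X, 𝓑), m, X₁, X₂ and κ be as in the two-component example. Then the chain satisfies PRP(m): for every measurable set A, the set of points x ∈ A for which it is not the case that for every N there exists t ≥ N with κ^t x A > 0 has m-measure zero. (Together with the summability of (κ^n m)(A) for A ⊆ X₁ this shows that PRP(m) does not imply ∑_{n≥1} (κ^n m)(A) = ∞ for all positive-measure A.) -/
open MeasureTheory ProbabilityTheory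

/-- **Corollary for Example 5.** The two-component example satisfies `PRP(m)`:
for every measurable `A`, the set of points of `A` that are not Poincaré recurrent with
respect to `A` is `m`-null. -/
theorem stmt14 {X : Type*} [MeasurableSpace X] (m : Measure X) [IsFiniteMeasure m]
    (X₁ X₂ : Set X) (hX₁ : MeasurableSet X₁) (hX₂ : MeasurableSet X₂)
    (hdisj : Disjoint X₁ X₂) (hunion : X₁ ∪ X₂ = Set.univ)
    (hm₁ : 0 < m X₁) (hm₂ : 0 < m X₂)
    (κ : Kernel X X) [IsMarkovKernel κ]
    (hκ₁ : ∀ x ∈ X₁, ∀ B : Set X, MeasurableSet B →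
      κ x B = m (B ∩ X₁) / (2 * m X₁) + m (B ∩ X₂) / (2 * m X₂))
    (hκ₂ : ∀ x ∈ X₂, ∀ B : Set X, MeasurableSet B → κ x B = m (B ∩ X₂) / m X₂) :
    PRP κ m := by
  intro A hA
  have hstep : ∀ (t : ℕ) (x : X), kiter κ (t + 1) x A = ∫⁻ y, kiter κ t y A ∂(κ x) := by
    intro t x
    rw [show kiter κ (t + 1) = (kiter κ t) ∘ₖ κ from rfl, Kernel.comp_apply' _ _ _ hA]
  have hmeas : ∀ t : ℕ, Measurable fun y => kiter κ t y A :=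
    fun t => (kiter κ t).measurable_coe hA
  have hone : ∀ x : X, kiter κ 1 x A = κ x A := by
    intro x
    show (Kernel.id ∘ₖ κ) x A = κ x A
    rw [Kernel.id_comp]
  by_cases h2 : m (A ∩ X₂) = 0
  · by_cases h1 : m (A ∩ X₁) = 0
    · have hA0 : m A = 0 := by
        have hAeq : A = (A ∩ X₁) ∪ (A ∩ X₂) := by
          rw [← Set.inter_union_distrib_left, hunion, Set.inter_univ]
        rw [hAeq]
        exact le_antisymm ((measure_union_le _ _).trans (by simp [h1, h2])) zero_le
      exact measure_mono_null (Set.sep_subset _ _) hA0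
    · have key : ∀ t : ℕ, ∀ x ∈ X₁, 0 < kiter κ (t + 1) x A := by
        intro t
        induction t with
        | zero =>
          intro x hx
          rw [hone, hκ₁ x hx A hA]
          exact lt_of_lt_of_le (ENNReal.div_pos h1 (by finiteness)) le_self_add
        | succ t ih =>
          intro x hx
          rw [hstep, lintegral_pos_iff_support (hmeas (t + 1))]
          have hsub : X₁ ⊆ Function.support fun y => kiter κ (t + 1) y A :=
            fun y hy => (ih y hy).ne'
          refine lt_of_lt_of_le ?_ (measure_mono hsub)
          rw [hκ₁ x hx X₁ hX₁, Set.inter_self]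
          exact lt_of_lt_of_le (ENNReal.div_pos hm₁.ne' (by finiteness)) le_self_add
      refine measure_mono_null ?_ h2
      intro x hx
      rcases hx with ⟨hxA, hxnr⟩
      have hx2 : x ∈ X₂ := by
        rcases (hunion ▸ Set.mem_univ x : x ∈ X₁ ∪ X₂) with h | h
        · exact absurd (fun N => ⟨N + 1, Nat.le_succ N, key N x h⟩) hxnr
        · exact h
      exact ⟨hxA, hx2⟩
  · have h2' : m (A ∩ X₂) ≠ 0 := h2
    have key : ∀ t : ℕ, ∀ x : X, 0 < kiter κ (t + 1) x A := by
      intro t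
      induction t with
      | zero =>
        intro x
        rw [hone]
        rcases (hunion ▸ Set.mem_univ x : x ∈ X₁ ∪ X₂) with h | h
        · rw [hκ₁ x h A hA]
          exact lt_of_lt_of_le (ENNReal.div_pos h2' (by finiteness)) le_add_self
        · rw [hκ₂ x h A hA]
          exact ENNReal.div_pos h2' (by finiteness)
      | succ t ih =>
        intro x
        rw [hstep, lintegral_pos_iff_support (hmeas (t + 1))]
        have hsub : Set.univ ⊆ Function.support fun y => kiter κ (t + 1) y A :=
          fun y _ => (ih y).ne'
        calc (0 : ENNReal) < 1 := one_pos
          _ = κ x Set.univ := (measure_univ).symm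
          _ ≤ κ x (Function.support fun y => kiter κ (t + 1) y A) := measure_mono hsub
    have hempty : {x ∈ A | ¬ PoincareRecurrent κ x A} ⊆ (∅ : Set X) := by
      intro x hx
      exact absurd (fun N => ⟨N + 1, Nat.le_succ N, key N x⟩) hx.2
    exact measure_mono_null hempty measure_empty
end

section
/- Let T : [0,1] → [0,1] be the map defined by T(0) = 4/5, T(x) = x² for 0 < x < 1/2, T(x) = 1 − (1−x)² for 1/2 ≤ x < 1, and T(1) = 1/5. Then T has no topologically recurrent points: for every x ∈ [0,1] there exists an open (in [0,1]) set U containing x such that T^t(x) ∉ U for all t ≥ 1. -/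
/-- **Example 7 of the paper.** The map `T : [0,1] → [0,1]` with `T 0 = 4/5`,
`T x = x²` for `0 < x < 1/2`, `T x = 1 - (1-x)²` for `1/2 ≤ x < 1` and `T 1 = 1/5` has no
topologically recurrent points: every `x ∈ [0,1]` has a relatively open neighborhood `U` in
`[0,1]` which the orbit of `x` never revisits at times `t ≥ 1`. -/
theorem stmt16 (T : ℝ → ℝ) (hmaps : Set.MapsTo T (Set.Icc 0 1) (Set.Icc 0 1))
    (hT0 : T 0 = 4 / 5)
    (hT1 : ∀ x : ℝ, 0 < x → x < 1 / 2 → T x = x ^ 2)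
    (hT2 : ∀ x : ℝ, 1 / 2 ≤ x → x < 1 → T x = 1 - (1 - x) ^ 2)
    (hT3 : T 1 = 1 / 5) :
    ∀ x ∈ Set.Icc (0 : ℝ) 1, ∃ U : Set ℝ, U ⊆ Set.Icc (0 : ℝ) 1 ∧ x ∈ U ∧
      IsOpen (Subtype.val ⁻¹' U : Set (Set.Icc (0 : ℝ) 1)) ∧
      ∀ t : ℕ, 1 ≤ t → T^[t] x ∉ U := by
  -- open sets of the form (a,1] and [0,a)
  have openIoi : ∀ a : ℝ, IsOpen (Subtype.val ⁻¹' (Set.Icc 0 1 ∩ Set.Ioi a) :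
      Set (Set.Icc (0 : ℝ) 1)) := by
    intro a
    have : (Subtype.val ⁻¹' (Set.Icc 0 1 ∩ Set.Ioi a) : Set (Set.Icc (0:ℝ) 1)) =
        Subtype.val ⁻¹' (Set.Ioi a) := by
      ext z; simp [z.2.1, z.2.2]
    rw [this]
    exact isOpen_Ioi.preimage continuous_subtype_val
  have openIio : ∀ a : ℝ, IsOpen (Subtype.val ⁻¹' (Set.Icc 0 1 ∩ Set.Iio a) :
      Set (Set.Icc (0 : ℝ) 1)) := by
    intro a
    have : (Subtype.val ⁻¹' (Set.Icc 0 1 ∩ Set.Iio a) : Set (Set.Icc (0:ℝ) 1)) =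
        Subtype.val ⁻¹' (Set.Iio a) := by
      ext z; simp [z.2.1, z.2.2]
    rw [this]
    exact isOpen_Iio.preimage continuous_subtype_val
  -- key estimates
  have key1 : ∀ y : ℝ, 0 < y → y ≤ 1/4 → 0 < T y ∧ T y ≤ y := by
    intro y h1 h2
    rw [hT1 y h1 (by linarith)]
    constructor <;> nlinarith
  have key2 : ∀ y : ℝ, 1/2 ≤ y → y < 1 → y < T y ∧ T y < 1 := by
    intro y h1 h2
    rw [hT2 y h1 h2]
    constructor <;> nlinarith
  intro x hx
  rcases eq_or_lt_of_le hx.1 with h0 | h0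
  · -- x = 0 : orbit stays in [4/5, 1), take U = [0, 1/2)
    refine ⟨Set.Icc 0 1 ∩ Set.Iio (1/2), Set.inter_subset_left,
      ⟨hx, by rw [← h0]; norm_num⟩, openIio _, ?_⟩
    have claim : ∀ t, 1 ≤ t → T^[t] x ∈ Set.Ico (4/5 : ℝ) 1 := by
      intro t ht
      induction t with
      | zero => omega
      | succ n ih =>
        rcases Nat.lt_or_ge n 1 with h | h
        · interval_cases n
          rw [Function.iterate_succ_apply', Function.iterate_zero_apply, ← h0, hT0]
          norm_num
        · have hn := ih h
          rw [Function.iterate_succ_apply']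
          have := key2 _ (by linarith [hn.1]) hn.2
          exact ⟨by linarith [hn.1, this.1], this.2⟩
    intro t ht hmem
    have := (claim t ht).1
    have := hmem.2
    simp only [Set.mem_Iio] at this
    linarith
  rcases eq_or_lt_of_le hx.2 with h1 | h1
  · -- x = 1 : orbit stays in (0, 1/5], take U = (1/2, 1]
    refine ⟨Set.Icc 0 1 ∩ Set.Ioi (1/2), Set.inter_subset_left,
      ⟨hx, by rw [h1]; norm_num⟩, openIoi _, ?_⟩
    have claim : ∀ t, 1 ≤ t → T^[t] x ∈ Set.Ioc (0 : ℝ) (1/5) := by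
      intro t ht
      induction t with
      | zero => omega
      | succ n ih =>
        rcases Nat.lt_or_ge n 1 with h | h
        · interval_cases n
          rw [Function.iterate_succ_apply', Function.iterate_zero_apply, h1, hT3]
          norm_num
        · have hn := ih h
          rw [Function.iterate_succ_apply']
          have := key1 _ hn.1 (by linarith [hn.2])
          exact ⟨this.1, by linarith [hn.2, this.2]⟩
    intro t ht hmem
    have := (claim t ht).2
    have := hmem.2
    simp only [Set.mem_Ioi] at this
    linarith
  rcases lt_or_ge x (1/2) with h2 | h2
  · -- 0 < x < 1/2 : orbit stays in (0, x²], take U = (x², 1]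
    have hx2 : x ^ 2 < x := by nlinarith
    refine ⟨Set.Icc 0 1 ∩ Set.Ioi (x ^ 2), Set.inter_subset_left,
      ⟨hx, hx2⟩, openIoi _, ?_⟩
    have claim : ∀ t, 1 ≤ t → T^[t] x ∈ Set.Ioc (0 : ℝ) (x ^ 2) := by
      intro t ht
      induction t with
      | zero => omega
      | succ n ih =>
        rcases Nat.lt_or_ge n 1 with h | h
        · interval_cases n
          rw [Function.iterate_succ_apply', Function.iterate_zero_apply, hT1 x h0 h2]
          exact ⟨by positivity, le_refl _⟩
        · have hn := ih h
          rw [Function.iterate_succ_apply']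
          have := key1 _ hn.1 (by nlinarith [hn.2])
          exact ⟨this.1, by linarith [hn.2, this.2]⟩
    intro t ht hmem
    have := (claim t ht).2
    have := hmem.2
    simp only [Set.mem_Ioi] at this
    linarith
  · -- 1/2 ≤ x < 1 : orbit stays in [T x, 1), take U = [0, T x)
    have hTx := key2 x h2 h1
    refine ⟨Set.Icc 0 1 ∩ Set.Iio (T x), Set.inter_subset_left,
      ⟨hx, hTx.1⟩, openIio _, ?_⟩
    have claim : ∀ t, 1 ≤ t → T^[t] x ∈ Set.Ico (T x) 1 := by
      intro t ht
      induction t with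
      | zero => omega
      | succ n ih =>
        rcases Nat.lt_or_ge n 1 with h | h
        · interval_cases n
          rw [Function.iterate_succ_apply', Function.iterate_zero_apply]
          exact ⟨le_refl _, hTx.2⟩
        · have hn := ih h
          rw [Function.iterate_succ_apply']
          have := key2 _ (by linarith [hn.1, hTx.1]) hn.2
          exact ⟨by linarith [hn.1, this.1], this.2⟩
    intro t ht hmem
    have := (claim t ht).1
    have := hmem.2
    simp only [Set.mem_Iio] at this
    linarith
end

section
/- Let T : [0,1] → [0,1] be the map defined by T(0) = 4/5, T(x) = x² for 0 < x < 1/2, T(x) = 1 − (1−x)² for 1/2 ≤ x < 1, and T(1) = 1/5. Then there is no T-invariant Borel probability measure on [0,1], i.e. no Borel probability measure μ with μ(T⁻¹(A)) = μ(A) for every Borel set A. -/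
open MeasureTheory

/-- The map `T : [0,1] → [0,1]` with `T 0 = 4/5`, `T x = x²` for
`0 < x < 1/2`, `T x = 1 - (1-x)²` for `1/2 ≤ x < 1` and `T 1 = 1/5` admits no invariant Borel
probability measure on `[0,1]`: there is no Borel probability measure `μ` carried by `[0,1]`
with `μ (T⁻¹ A) = μ A` for every Borel set `A`. -/
theorem stmt17 (T : ℝ → ℝ) (hmeas : Measurable T)
    (hmaps : Set.MapsTo T (Set.Icc 0 1) (Set.Icc 0 1))
    (hT0 : T 0 = 4 / 5)
    (hT1 : ∀ x : ℝ, 0 < x → x < 1 / 2 → T x = x ^ 2)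
    (hT2 : ∀ x : ℝ, 1 / 2 ≤ x → x < 1 → T x = 1 - (1 - x) ^ 2)
    (hT3 : T 1 = 1 / 5) :
    ¬ ∃ μ : Measure ℝ, IsProbabilityMeasure μ ∧ μ (Set.Icc (0 : ℝ) 1)ᶜ = 0 ∧
      ∀ A : Set ℝ, MeasurableSet A → μ (T ⁻¹' A) = μ A := by
  rintro ⟨μ, hprob, hnull, hinv⟩
  -- a measure of any set equals measure of its trace on [0,1]
  have key : ∀ S : Set ℝ, μ S = μ (S ∩ Set.Icc 0 1) := by
    intro S
    refine le_antisymm ?_ (measure_mono Set.inter_subset_left)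
    calc μ S ≤ μ (S ∩ Set.Icc 0 1) + μ (S \ Set.Icc 0 1) :=
          measure_le_inter_add_diff μ S _
      _ ≤ μ (S ∩ Set.Icc 0 1) + μ (Set.Icc (0:ℝ) 1)ᶜ := by
          gcongr
          exact Set.diff_subset_compl S _
      _ = μ (S ∩ Set.Icc 0 1) := by rw [hnull, add_zero]
  -- case analysis on points of [0,1]
  have cases4 : ∀ x : ℝ, x ∈ Set.Icc (0:ℝ) 1 →
      x = 0 ∨ (0 < x ∧ x < 1/2) ∨ (1/2 ≤ x ∧ x < 1) ∨ x = 1 := by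
    intro x hx
    obtain ⟨hx0, hx1⟩ := hx
    rcases eq_or_lt_of_le hx0 with h0 | h0
    · exact Or.inl h0.symm
    rcases eq_or_lt_of_le hx1 with h1 | h1
    · exact Or.inr (Or.inr (Or.inr h1))
    rcases lt_or_ge x (1/2) with h2 | h2
    · exact Or.inr (Or.inl ⟨h0, h2⟩)
    · exact Or.inr (Or.inr (Or.inl ⟨h2, h1⟩))
  -- points never hit by T from [0,1] have measure zero
  have point : ∀ c : ℝ, (∀ x ∈ Set.Icc (0:ℝ) 1, T x ≠ c) → μ {c} = 0 := by
    intro c hc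
    have h := hinv {c} (measurableSet_singleton c)
    rw [key (T ⁻¹' {c})] at h
    have he : T ⁻¹' {c} ∩ Set.Icc 0 1 = ∅ := by
      ext x
      simp only [Set.mem_inter_iff, Set.mem_preimage, Set.mem_singleton_iff,
        Set.mem_empty_iff_false, iff_false, not_and]
      intro hTx hx
      exact hc x hx hTx
    rw [he, measure_empty] at h
    exact h.symm
  have h1 : μ {(1:ℝ)} = 0 := by
    refine point 1 ?_
    intro x hx heq
    rcases cases4 x hx with h | ⟨ha, hb⟩ | ⟨ha, hb⟩ | h
    · rw [h, hT0] at heq; norm_num at heq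
    · rw [hT1 x ha hb] at heq; nlinarith
    · rw [hT2 x ha hb] at heq; nlinarith
    · rw [h, hT3] at heq; norm_num at heq
  have h0 : μ {(0:ℝ)} = 0 := by
    refine point 0 ?_
    intro x hx heq
    rcases cases4 x hx with h | ⟨ha, hb⟩ | ⟨ha, hb⟩ | h
    · rw [h, hT0] at heq; norm_num at heq
    · rw [hT1 x ha hb] at heq; nlinarith
    · rw [hT2 x ha hb] at heq; nlinarith
    · rw [h, hT3] at heq; norm_num at heq
  have hhalf : μ {(1/2:ℝ)} = 0 := by
    refine point (1/2) ?_
    intro x hx heq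
    rcases cases4 x hx with h | ⟨ha, hb⟩ | ⟨ha, hb⟩ | h
    · rw [h, hT0] at heq; norm_num at heq
    · rw [hT1 x ha hb] at heq; nlinarith
    · rw [hT2 x ha hb] at heq; nlinarith
    · rw [h, hT3] at heq; norm_num at heq
  -- the key step on the left
  have left : ∀ a : ℝ, 0 < a → a ≤ 1/2 →
      μ (Set.Ioo 0 (a^2)) = μ (Set.Ioo 0 a) := by
    intro a ha ha'
    have h := hinv (Set.Ioo 0 (a^2)) measurableSet_Ioo
    rw [key (T ⁻¹' Set.Ioo 0 (a^2))] at h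
    have hsub : T ⁻¹' Set.Ioo 0 (a^2) ∩ Set.Icc 0 1 ⊆ Set.Ioo 0 a ∪ {1} := by
      rintro x ⟨hTx, hx⟩
      obtain ⟨hp, hq⟩ := hTx
      rcases cases4 x hx with hc | ⟨hc1, hc2⟩ | ⟨hc1, hc2⟩ | hc
      · rw [hc, hT0] at hq; nlinarith
      · rw [hT1 x hc1 hc2] at hq
        exact Or.inl ⟨hc1, by nlinarith⟩
      · rw [hT2 x hc1 hc2] at hq; nlinarith
      · exact Or.inr (by simp [hc])
    have hsup : Set.Ioo 0 a ⊆ T ⁻¹' Set.Ioo 0 (a^2) ∩ Set.Icc 0 1 := by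
      rintro x ⟨hx0, hxa⟩
      have hx2 : x < 1/2 := lt_of_lt_of_le hxa ha'
      refine ⟨?_, le_of_lt hx0, by linarith⟩
      rw [Set.mem_preimage, hT1 x hx0 hx2]
      exact ⟨by positivity, by nlinarith⟩
    refine le_antisymm ?_ ?_
    · calc μ (Set.Ioo 0 (a^2)) = μ (T ⁻¹' Set.Ioo 0 (a^2) ∩ Set.Icc 0 1) := h.symm
        _ ≤ μ (Set.Ioo 0 a ∪ {1}) := measure_mono hsub
        _ ≤ μ (Set.Ioo 0 a) + μ {(1:ℝ)} := measure_union_le _ _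
        _ = μ (Set.Ioo 0 a) := by rw [h1, add_zero]
    · calc μ (Set.Ioo 0 a) ≤ μ (T ⁻¹' Set.Ioo 0 (a^2) ∩ Set.Icc 0 1) :=
          measure_mono hsup
        _ = μ (Set.Ioo 0 (a^2)) := h
  -- the key step on the right
  have right : ∀ a : ℝ, 0 < a → a ≤ 1/2 →
      μ (Set.Ioo (1 - a^2) 1) = μ (Set.Ioo (1-a) 1) := by
    intro a ha ha'
    have h := hinv (Set.Ioo (1 - a^2) 1) measurableSet_Ioo
    rw [key (T ⁻¹' Set.Ioo (1 - a^2) 1)] at h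
    have hsub : T ⁻¹' Set.Ioo (1 - a^2) 1 ∩ Set.Icc 0 1 ⊆
        Set.Ioo (1-a) 1 ∪ {0} := by
      rintro x ⟨hTx, hx⟩
      obtain ⟨hp, hq⟩ := hTx
      rcases cases4 x hx with hc | ⟨hc1, hc2⟩ | ⟨hc1, hc2⟩ | hc
      · exact Or.inr (by simp [hc])
      · rw [hT1 x hc1 hc2] at hp; nlinarith
      · rw [hT2 x hc1 hc2] at hp
        exact Or.inl ⟨by nlinarith, hc2⟩
      · rw [hc, hT3] at hp; nlinarith
    have hsup : Set.Ioo (1-a) 1 ⊆ T ⁻¹' Set.Ioo (1 - a^2) 1 ∩ Set.Icc 0 1 := by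
      rintro x ⟨hx0, hx1⟩
      have hx2 : 1/2 ≤ x := by linarith
      refine ⟨?_, by linarith, le_of_lt hx1⟩
      rw [Set.mem_preimage, hT2 x hx2 hx1]
      constructor
      · nlinarith
      · nlinarith
    refine le_antisymm ?_ ?_
    · calc μ (Set.Ioo (1 - a^2) 1) = μ (T ⁻¹' Set.Ioo (1 - a^2) 1 ∩ Set.Icc 0 1) := h.symm
        _ ≤ μ (Set.Ioo (1-a) 1 ∪ {0}) := measure_mono hsub
        _ ≤ μ (Set.Ioo (1-a) 1) + μ {(0:ℝ)} := measure_union_le _ _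
        _ = μ (Set.Ioo (1-a) 1) := by rw [h0, add_zero]
    · calc μ (Set.Ioo (1-a) 1) ≤ μ (T ⁻¹' Set.Ioo (1 - a^2) 1 ∩ Set.Icc 0 1) :=
          measure_mono hsup
        _ = μ (Set.Ioo (1 - a^2) 1) := h
  -- the sequence a_n = (1/2)^(2^n)
  set a : ℕ → ℝ := fun n => (1/2 : ℝ) ^ (2^n) with ha_def
  have ha_pos : ∀ n, 0 < a n := fun n => by positivity
  have ha_le : ∀ n, a n ≤ 1/2 := by
    intro n
    have : (1/2:ℝ)^(2^n) ≤ (1/2:ℝ)^1 :=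
      pow_le_pow_of_le_one (by norm_num) (by norm_num) (Nat.one_le_two_pow)
    simpa [ha_def] using this
  have ha_succ : ∀ n, a (n+1) = (a n)^2 := by
    intro n
    simp only [ha_def]
    rw [← pow_mul]
    ring_nf
  have ha_small : ∀ n, a n ≤ (1/2:ℝ)^n := by
    intro n
    exact pow_le_pow_of_le_one (by norm_num) (by norm_num) (Nat.le_of_lt (Nat.lt_two_pow_self (n := n)))
  have ha_anti : Antitone a := by
    refine antitone_nat_of_succ_le ?_
    intro n
    rw [ha_succ n]
    nlinarith [ha_pos n, ha_le n]
  -- left: μ (Ioo 0 (a n)) is constant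
  have hLconst : ∀ n, μ (Set.Ioo 0 (a n)) = μ (Set.Ioo 0 (1/2)) := by
    intro n
    induction n with
    | zero => simp [ha_def]
    | succ n ih =>
      rw [ha_succ n, left (a n) (ha_pos n) (ha_le n), ih]
  have hRconst : ∀ n, μ (Set.Ioo (1 - a n) 1) = μ (Set.Ioo (1/2) 1) := by
    intro n
    induction n with
    | zero => norm_num [ha_def]
    | succ n ih =>
      rw [ha_succ n, right (a n) (ha_pos n) (ha_le n), ih]
  -- the intersections are empty
  have hLempty : ⋂ n, Set.Ioo (0:ℝ) (a n) = ∅ := by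
    ext x
    simp only [Set.mem_iInter, Set.mem_Ioo, Set.mem_empty_iff_false, iff_false, not_forall]
    by_contra hcon
    push_neg at hcon
    obtain ⟨n, hn⟩ := exists_pow_lt_of_lt_one (hcon 0).1 (by norm_num : (1/2:ℝ) < 1)
    exact absurd ((hcon n).2.trans_le (ha_small n)) (not_lt.mpr hn.le)
  have hRempty : ⋂ n, Set.Ioo (1 - a n) (1:ℝ) = ∅ := by
    ext x
    simp only [Set.mem_iInter, Set.mem_Ioo, Set.mem_empty_iff_false, iff_false, not_forall]
    by_contra hcon
    push_neg at hcon
    have hx1 : x < 1 := (hcon 0).2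
    obtain ⟨n, hn⟩ := exists_pow_lt_of_lt_one (by linarith : (0:ℝ) < 1 - x)
      (by norm_num : (1/2:ℝ) < 1)
    have : 1 - a n < x := (hcon n).1
    have : a n ≤ (1/2:ℝ)^n := ha_small n
    linarith
  -- continuity from above gives μ (Ioo 0 (1/2)) = 0
  have hfinL : ∃ n, μ (Set.Ioo (0:ℝ) (a n)) ≠ ⊤ := ⟨0, measure_ne_top μ _⟩
  have hL : μ (Set.Ioo (0:ℝ) (1/2)) = 0 := by
    have hanti : Antitone (fun n => Set.Ioo (0:ℝ) (a n)) := by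
      intro m n hmn
      exact Set.Ioo_subset_Ioo le_rfl (ha_anti hmn)
    have := hanti.measure_iInter
      (fun n => (measurableSet_Ioo).nullMeasurableSet) hfinL
    rw [hLempty, measure_empty] at this
    have h2 : ⨅ n, μ (Set.Ioo (0:ℝ) (a n)) = μ (Set.Ioo (0:ℝ) (1/2)) := by
      simp only [hLconst, iInf_const]
    rw [h2] at this
    exact this.symm
  have hR : μ (Set.Ioo (1/2:ℝ) 1) = 0 := by
    have hanti : Antitone (fun n => Set.Ioo (1 - a n) (1:ℝ)) := by
      intro m n hmn
      exact Set.Ioo_subset_Ioo (by linarith [ha_anti hmn]) le_rfl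
    have := hanti.measure_iInter
      (fun n => (measurableSet_Ioo).nullMeasurableSet) ⟨0, measure_ne_top μ _⟩
    rw [hRempty, measure_empty] at this
    have h2 : ⨅ n, μ (Set.Ioo (1 - a n) (1:ℝ)) = μ (Set.Ioo (1/2:ℝ) 1) := by
      simp only [hRconst, iInf_const]
    rw [h2] at this
    exact this.symm
  -- conclude
  have hIcc : μ (Set.Icc (0:ℝ) 1) = 1 := by
    have := key Set.univ
    rw [Set.univ_inter, measure_univ] at this
    exact this.symm
  have hcover : Set.Icc (0:ℝ) 1 ⊆
      {0} ∪ Set.Ioo 0 (1/2) ∪ {1/2} ∪ Set.Ioo (1/2) 1 ∪ {1} := by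
    intro x hx
    rcases cases4 x hx with h | ⟨ha1, hb1⟩ | ⟨ha1, hb1⟩ | h
    · exact Or.inl (Or.inl (Or.inl (Or.inl h)))
    · exact Or.inl (Or.inl (Or.inl (Or.inr ⟨ha1, hb1⟩)))
    · rcases eq_or_lt_of_le ha1 with he | he
      · exact Or.inl (Or.inl (Or.inr he.symm))
      · exact Or.inl (Or.inr ⟨he, hb1⟩)
    · exact Or.inr h
  have : μ (Set.Icc (0:ℝ) 1) = 0 := by
    refine le_antisymm ?_ (zero_le)
    calc μ (Set.Icc (0:ℝ) 1)
        ≤ μ ({0} ∪ Set.Ioo 0 (1/2) ∪ {1/2} ∪ Set.Ioo (1/2) 1 ∪ {1} : Set ℝ) :=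
          measure_mono hcover
      _ = 0 := by
          rw [measure_union_null]
          · rw [measure_union_null]
            · rw [measure_union_null]
              · rw [measure_union_null h0 hL]
              · exact hhalf
            · exact hR
          · exact h1
  rw [hIcc] at this
  exact one_ne_zero this
end
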